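/- arXiv:2307.16475 — 2 statements merged into one kernel-verified Lean document; each statement's English description precedes it below -/
import Mathlib

section
/- Let B be a commutative semilocal ring all of whose residue fields at maximal ideals are infinite, and let f ∈ B[x₁,…,x_n] be a polynomial whose image in (B/m)[x₁,…,x_n] is nonzero for every maximal ideal m of B. Then there exists a ∈ B^n with f(a) a unit of B. -/
/-- Let `B` be a commutative semilocal ring whose residue fields at maximal ideals are all
infinite, and let `f` be a polynomial over `B` whose reduction modulo every maximal ideal
is nonzero. Then `f` takes a unit value at some point of `B^n`. -/
theorem stmt14 (B : Type*) [CommRing B] (hfin : {I : Ideal B | I.IsMaximal}.Finite)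
    (hinf : ∀ I : Ideal B, I.IsMaximal → Infinite (B ⧸ I)) (n : ℕ)
    (f : MvPolynomial (Fin n) B)
    (hf : ∀ I : Ideal B, I.IsMaximal →
      MvPolynomial.map (Ideal.Quotient.mk I) f ≠ 0) :
    ∃ a : Fin n → B, IsUnit (MvPolynomial.eval a f) := by
  haveI : Finite {I : Ideal B | I.IsMaximal} := hfin
  have key : ∀ i : {I : Ideal B | I.IsMaximal}, ∃ x : Fin n → B ⧸ (i : Ideal B),
      MvPolynomial.eval x (MvPolynomial.map (Ideal.Quotient.mk (i : Ideal B)) f) ≠ 0 := by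
    rintro ⟨I, hI⟩
    haveI : I.IsMaximal := hI
    haveI := Ideal.Quotient.field I
    haveI := hinf I hI
    by_contra h
    push_neg at h
    exact hf I hI (MvPolynomial.funext fun x => by simpa using h x)
  choose x hx using key
  have hco : Pairwise fun i j : {I : Ideal B | I.IsMaximal} =>
      IsCoprime (i : Ideal B) (j : Ideal B) := fun i j hij =>
    Ideal.isCoprime_iff_sup_eq.mpr
      (Ideal.IsMaximal.coprime_of_ne i.2 j.2 (Subtype.coe_injective.ne hij))
  have lift : ∀ jj : Fin n, ∃ b : B, ∀ i : {I : Ideal B | I.IsMaximal},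
      Ideal.Quotient.mk (i : Ideal B) b = x i jj :=
    fun jj => Ideal.pi_quotient_surjective hco (fun i => x i jj)
  choose a ha using lift
  refine ⟨a, ?_⟩
  by_contra hu
  obtain ⟨I, hI, hmem⟩ := exists_max_ideal_of_mem_nonunits hu
  have h0 : Ideal.Quotient.mk I (MvPolynomial.eval a f) = 0 :=
    Ideal.Quotient.eq_zero_iff_mem.mpr hmem
  have heq : Ideal.Quotient.mk I (MvPolynomial.eval a f) =
      MvPolynomial.eval (x ⟨I, hI⟩) (MvPolynomial.map (Ideal.Quotient.mk I) f) := by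
    rw [MvPolynomial.eval_map, ← MvPolynomial.eval₂_id (g := a) f,
      MvPolynomial.eval₂_comp_left (Ideal.Quotient.mk I) (RingHom.id B) a f]
    simp only [RingHom.comp_id]
    congr 1
    funext jj
    simpa using ha jj ⟨I, hI⟩
  exact hx ⟨I, hI⟩ (heq ▸ h0)
end

section
/- Let G be a group acting on a set X and suppose for some x₀ ∈ X the orbit map is surjective (the action is transitive) with stabilizer H. Let W = N_G(H)/H act on the right of X via the identification X ≅ G/H (i.e. (g·x₀)·[n] := gn·x₀, which is well defined). Then two points x, y ∈ X lie in the same W-orbit if and only if Stab_G(x) = Stab_G(y). -/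
/-- Let `G` act transitively on `X` with `x₀ ∈ X`, `H = Stab_G(x₀)`, and let
`W = N_G(H)/H` act on the right of `X` by `(g • x₀) · [n] = (gn) • x₀`. This action is
well defined, and two points of `X` lie in the same `W`-orbit iff they have the same
stabilizer. -/
theorem stmt19 (G X : Type*) [Group G] [MulAction G X]
    (htrans : ∀ x y : X, ∃ g : G, g • x = y) (x₀ : X) :
    (∀ n ∈ Subgroup.normalizer (MulAction.stabilizer G x₀ : Set G), ∀ g g' : G,
      g • x₀ = g' • x₀ → (g * n) • x₀ = (g' * n) • x₀) ∧
    (∀ x y : X,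
      (∃ n ∈ Subgroup.normalizer (MulAction.stabilizer G x₀ : Set G),
        ∃ g : G, g • x₀ = x ∧ (g * n) • x₀ = y) ↔
      MulAction.stabilizer G x = MulAction.stabilizer G y) := by
  set H := MulAction.stabilizer G x₀ with hH
  have key : ∀ g g' : G, g • x₀ = g' • x₀ ↔ g'⁻¹ * g ∈ H := by
    intro g g'
    rw [hH, MulAction.mem_stabilizer_iff, mul_smul, inv_smul_eq_iff]
  have stabconj : ∀ (c : G) (x : X) (a : G),
      a ∈ MulAction.stabilizer G (c • x) ↔ c⁻¹ * a * c ∈ MulAction.stabilizer G x := by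
    intro c x a
    simp only [MulAction.mem_stabilizer_iff, mul_smul, inv_smul_eq_iff]
  have step : ∀ n ∈ Subgroup.normalizer (H : Set G), ∀ b : G, b ∈ H ↔ n⁻¹ * b * n ∈ H := by
    intro n hn b
    have h := Subgroup.mem_normalizer_iff.mp hn (n⁻¹ * b * n)
    rw [show n * (n⁻¹ * b * n) * n⁻¹ = b by group] at h
    exact h.symm
  constructor
  · intro n hn g g' hgg'
    rw [key] at hgg' ⊢
    have h2 := (step n hn (g'⁻¹ * g)).mp hgg'
    rw [show n⁻¹ * (g'⁻¹ * g) * n = (g' * n)⁻¹ * (g * n) by group] at h2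
    exact h2
  · intro x y
    constructor
    · rintro ⟨n, hn, g, rfl, rfl⟩
      ext a
      rw [MulAction.mem_stabilizer_iff, MulAction.mem_stabilizer_iff,
        ← mul_smul, ← mul_smul, key, key,
        show (g * n)⁻¹ * (a * (g * n)) = n⁻¹ * (g⁻¹ * (a * g)) * n by group,
        ← step n hn]
    · intro hst
      obtain ⟨g, hg⟩ := htrans x₀ x
      obtain ⟨k, hk⟩ := htrans x₀ y
      have h1 : ∀ b : G, g * b * g⁻¹ ∈ MulAction.stabilizer G x ↔ b ∈ H := by
        intro b
        rw [← hg, stabconj, show g⁻¹ * (g * b * g⁻¹) * g = b by group]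
      have h2 : ∀ b : G, k * b * k⁻¹ ∈ MulAction.stabilizer G y ↔ b ∈ H := by
        intro b
        rw [← hk, stabconj, show k⁻¹ * (k * b * k⁻¹) * k = b by group]
      refine ⟨g⁻¹ * k, ?_, g, hg, ?_⟩
      · rw [Subgroup.mem_normalizer_iff]
        intro b
        calc b ∈ H ↔ k * b * k⁻¹ ∈ MulAction.stabilizer G y := (h2 b).symm
          _ ↔ g * ((g⁻¹ * k) * b * (g⁻¹ * k)⁻¹) * g⁻¹ ∈ MulAction.stabilizer G x := by
              rw [show g * ((g⁻¹ * k) * b * (g⁻¹ * k)⁻¹) * g⁻¹ = k * b * k⁻¹ by group, hst]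
          _ ↔ (g⁻¹ * k) * b * (g⁻¹ * k)⁻¹ ∈ H := h1 _
      · rw [show g * (g⁻¹ * k) = k by group]
        exact hk
end
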